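/- Let a₁, a₂, a₃ ∈ ℝ, σ > 0, C ∈ ℝ, and define p(x,y) = C exp[(−a₁a₂x² − (1/2)a₂a₃x⁴ + a₂y²)/σ²]. Then p is a stationary solution of the Fokker–Planck equation of the stochastic Duffing oscillator: for all (x,y) ∈ ℝ², −[y ∂p/∂x + a₂ p + (a₁x + a₂y + a₃x³) ∂p/∂y] + (σ²/2) ∂²p/∂y² = 0. -/

import Mathlib

open Real

lemma duffing_aux_y (C A a₂ s : ℝ) (t : ℝ) :
    HasDerivAt (fun t : ℝ => C * Real.exp ((A + a₂ * t ^ 2) / s))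
      (C * Real.exp ((A + a₂ * t ^ 2) / s) * (2 * a₂ * t / s)) t := by
  have h1 : HasDerivAt (fun t : ℝ => (A + a₂ * t ^ 2) / s) (2 * a₂ * t / s) t := by
    have h2 := (((hasDerivAt_pow 2 t).const_mul a₂).const_add A).div_const s
    refine h2.congr_deriv ?_
    push_cast
    ring
  have := (h1.exp).const_mul C
  refine this.congr_deriv ?_
  ring

/-- The density `p(x,y) = C exp[(−a₁a₂x² − ½a₂a₃x⁴ + a₂y²)/σ²]` is a stationary
solution of the Fokker–Planck equation of the stochastic Duffing oscillator:
`−[y ∂p/∂x + a₂ p + (a₁x + a₂y + a₃x³) ∂p/∂y] + (σ²/2) ∂²p/∂y² = 0` on `ℝ²`. -/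
theorem duffing_fokker_planck_stationary
    (a₁ a₂ a₃ σ C : ℝ) (hσ : 0 < σ)
    (p : ℝ → ℝ → ℝ)
    (hp : ∀ x y, p x y =
      C * Real.exp ((-(a₁ * a₂) * x ^ 2 - (1 / 2) * a₂ * a₃ * x ^ 4 + a₂ * y ^ 2) / σ ^ 2)) :
    ∀ x y : ℝ,
      -(y * deriv (fun x' => p x' y) x + a₂ * p x y
          + (a₁ * x + a₂ * y + a₃ * x ^ 3) * deriv (fun y' => p x y') y)
        + σ ^ 2 / 2 * deriv (fun y' => deriv (fun y'' => p x y'') y') y = 0 := by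
  intro x y
  have hs : σ ^ 2 ≠ 0 := pow_ne_zero 2 hσ.ne'
  set s := σ ^ 2 with hsdef
  set A : ℝ := -(a₁ * a₂) * x ^ 2 - (1 / 2) * a₂ * a₃ * x ^ 4 with hA
  set pv : ℝ := C * Real.exp ((A + a₂ * y ^ 2) / s) with hpv
  -- y-derivative
  have hyfun : (fun y' => p x y') = fun y' : ℝ => C * Real.exp ((A + a₂ * y' ^ 2) / s) := by
    funext y'; rw [hp]
  have hdy : deriv (fun y' => p x y') y = pv * (2 * a₂ * y / s) := by
    rw [hyfun]; exact (duffing_aux_y C A a₂ s y).deriv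
  -- second y-derivative
  have hinner : (fun y' => deriv (fun y'' => p x y'') y')
      = fun y' : ℝ => C * Real.exp ((A + a₂ * y' ^ 2) / s) * (2 * a₂ * y' / s) := by
    funext y'
    rw [hyfun]; exact (duffing_aux_y C A a₂ s y').deriv
  have hlin : HasDerivAt (fun t : ℝ => 2 * a₂ * t / s) (2 * a₂ / s) y := by
    have := ((hasDerivAt_id y).const_mul (2 * a₂)).div_const s
    refine this.congr_deriv ?_
    ring
  have hdyy : deriv (fun y' => deriv (fun y'' => p x y'') y') y
      = pv * (2 * a₂ * y / s) * (2 * a₂ * y / s) + pv * (2 * a₂ / s) := by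
    rw [hinner]
    exact ((duffing_aux_y C A a₂ s y).mul hlin).deriv
  -- x-derivative
  have hdx : deriv (fun x' => p x' y) x
      = pv * ((-(a₁ * a₂) * (2 * x) - (1 / 2) * a₂ * a₃ * (4 * x ^ 3)) / s) := by
    have hxfun : (fun x' => p x' y) = fun x' : ℝ =>
        C * Real.exp ((-(a₁ * a₂) * x' ^ 2 - (1 / 2) * a₂ * a₃ * x' ^ 4 + a₂ * y ^ 2) / s) := by
      funext x'; rw [hp]
    rw [hxfun]
    have h1 : HasDerivAt (fun x' : ℝ =>
        (-(a₁ * a₂) * x' ^ 2 - (1 / 2) * a₂ * a₃ * x' ^ 4 + a₂ * y ^ 2) / s)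
        ((-(a₁ * a₂) * (2 * x) - (1 / 2) * a₂ * a₃ * (4 * x ^ 3)) / s) x := by
      have h2 := ((((hasDerivAt_pow 2 x).const_mul (-(a₁ * a₂))).sub
        ((hasDerivAt_pow 4 x).const_mul ((1 / 2) * a₂ * a₃))).add_const (a₂ * y ^ 2)).div_const s
      refine h2.congr_deriv ?_
      push_cast
      ring
    have := (h1.exp).const_mul C
    rw [this.deriv]
    rw [hpv, hA]
    ring
  rw [hdy, hdyy, hdx, hp x y, ← hA, ← hpv]
  field_simp
  ring
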